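/- Let σ be coordinatewise ReLU on ℝ² and φ an invertible affine transformation of ℝ². Let T ⊂ ℝ² and x ∈ ℝ² be such that x lies in a bounded path-connected component of ℝ² \ T. Write x' = φ⁻¹(σ(φ(x))) and T' = φ⁻¹(σ(φ(T))). If x' ≠ x, then x' ∈ T'. -/

import Mathlib

set_option maxHeartbeats 1000000 in

theorem stmt_6 (A : Matrix (Fin 2) (Fin 2) ℝ) (hA : IsUnit A.det) (b : Fin 2 → ℝ)
    (T : Set (Fin 2 → ℝ)) (x : Fin 2 → ℝ) (hxT : x ∈ Tᶜ)
    (hbdd : Bornology.IsBounded {y | JoinedIn Tᶜ x y})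
    (Φ : (Fin 2 → ℝ) → (Fin 2 → ℝ))
    (hΦ : Φ = fun z => A⁻¹.mulVec ((fun i => max (A.mulVec z i + b i) 0) - b))
    (hne : Φ x ≠ x) :
    Φ x ∈ Φ '' T := by
  classical
  have hAinv : A⁻¹ * A = 1 := Matrix.nonsing_inv_mul A hA
  have hAinv' : A * A⁻¹ = 1 := Matrix.mul_nonsing_inv A hA
  set d : Fin 2 → ℝ := fun i => min (A.mulVec x i + b i) 0 with hd
  obtain ⟨c, hc⟩ : ∃ c, c = A⁻¹.mulVec d := ⟨_, rfl⟩
  have hAc : A.mulVec c = d := by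
    rw [hc, Matrix.mulVec_mulVec, hAinv', Matrix.one_mulVec]
  have key : ∀ s : ℝ, 0 ≤ s → Φ (x + s • c) = Φ x := by
    intro s hs
    have harg : ((fun i => max (A.mulVec (x + s • c) i + b i) 0) - b)
        = ((fun i => max (A.mulVec x i + b i) 0) - b) := by
      funext i
      simp only [Pi.sub_apply]
      congr 1
      have h1 : A.mulVec (x + s • c) i = A.mulVec x i + s * d i := by
        rw [Matrix.mulVec_add, Matrix.mulVec_smul, hAc]
        simp [smul_eq_mul]
      rw [h1]
      rcases le_or_gt 0 (A.mulVec x i + b i) with h | h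
      · have hdi : d i = 0 := min_eq_right h
        rw [hdi, mul_zero, add_zero]
      · have hdi : d i = A.mulVec x i + b i := min_eq_left h.le
        rw [hdi]
        have h2 : A.mulVec x i + s * (A.mulVec x i + b i) + b i ≤ 0 := by nlinarith
        rw [max_eq_right h2, max_eq_right h.le]
    rw [hΦ]
    show A⁻¹.mulVec ((fun i => max (A.mulVec (x + s • c) i + b i) 0) - b)
        = A⁻¹.mulVec ((fun i => max (A.mulVec x i + b i) 0) - b)
    rw [harg]
  have hd0 : d ≠ 0 := by
    intro h0
    apply hne
    rw [hΦ]
    show A⁻¹.mulVec ((fun i => max (A.mulVec x i + b i) 0) - b) = x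
    have e1 : (fun i => max (A.mulVec x i + b i) 0) = fun i => A.mulVec x i + b i := by
      funext i
      have := congrFun h0 i
      simp only [hd, Pi.zero_apply] at this
      have hge : 0 ≤ A.mulVec x i + b i := by
        by_contra hlt
        push_neg at hlt
        rw [min_eq_left hlt.le] at this
        linarith
      exact max_eq_left hge
    rw [e1]
    have e2 : ((fun i => A.mulVec x i + b i) - b) = A.mulVec x := by
      funext i; simp
    rw [e2, Matrix.mulVec_mulVec, hAinv, Matrix.one_mulVec]
  have hc0 : c ≠ 0 := by
    intro h0
    apply hd0
    rw [← hAc, h0, Matrix.mulVec_zero]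
  by_contra hmem
  have hTc : ∀ s : ℝ, 0 ≤ s → x + s • c ∈ Tᶜ := by
    intro s hs hsT
    exact hmem ⟨x + s • c, hsT, key s hs⟩
  have hjoin : ∀ s : ℝ, 0 ≤ s → (x + s • c) ∈ {y | JoinedIn Tᶜ x y} := by
    intro s hs
    refine ⟨⟨⟨fun t => x + ((t : ℝ) * s) • c, by fun_prop⟩, by simp, by simp⟩, ?_⟩
    intro t
    exact hTc _ (mul_nonneg t.2.1 hs)
  rw [Metric.isBounded_iff_subset_closedBall 0] at hbdd
  obtain ⟨C, hC⟩ := hbdd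
  have hcn : 0 < ‖c‖ := norm_pos_iff.mpr hc0
  obtain ⟨s, hs⟩ : ∃ s : ℝ, s = (|C| + ‖x‖ + 1) / ‖c‖ := ⟨_, rfl⟩
  have hs0 : 0 ≤ s := by rw [hs]; positivity
  have hmem' := hC (hjoin s hs0)
  rw [Metric.mem_closedBall, dist_zero_right] at hmem'
  have h3 : ‖s • c‖ - ‖x‖ ≤ ‖x + s • c‖ := by
    have h4 : ‖s • c‖ ≤ ‖x + s • c‖ + ‖x‖ := by
      have h5 := norm_add_le (x + s • c) (-x)
      rw [norm_neg] at h5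
      have h6 : x + s • c + -x = s • c := by abel
      rw [h6] at h5
      exact h5
    linarith
  have h5 : ‖s • c‖ = |C| + ‖x‖ + 1 := by
    rw [norm_smul, Real.norm_eq_abs, abs_of_nonneg hs0, hs, div_mul_cancel₀]
    exact hcn.ne'
  have h6 : C ≤ |C| := le_abs_self C
  linarith
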